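/- arXiv:2309.11947 — 2 statements merged into one kernel-verified Lean document; each statement's English description precedes it below -/
import Mathlib

section
/- For partitions of n into at most 2 parts, the sum over all λ ⊢ n of (number of standard Young tableaux of shape λ) × (λ₀ − λ₁ + 1) equals 2ⁿ. -/
/-- `T` is a standard Young tableau on the set of cells `s`. -/
def IsSYT (s : Finset (ℕ × ℕ)) (T : ℕ × ℕ → ℕ) : Prop :=
  (∀ c ∉ s, T c = 0) ∧
  Set.BijOn T s (Set.Icc 1 s.card) ∧
  ∀ c ∈ s, ∀ c' ∈ s,
    ((c.1 = c'.1 ∧ c.2 < c'.2) ∨ (c.2 = c'.2 ∧ c.1 < c'.1)) → T c < T c'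

/-- The number of standard Young tableaux on the set of cells `s`. -/
noncomputable def sytCount (s : Finset (ℕ × ℕ)) : ℕ :=
  Nat.card {T : ℕ × ℕ → ℕ // IsSYT s T}

/-- Cells of the two-row Young diagram with row lengths `a ≥ b`. -/
def cellsTwoRow (a b : ℕ) : Finset (ℕ × ℕ) :=
  ((Finset.range a).image fun j => ((0 : ℕ), j)) ∪
    ((Finset.range b).image fun j => ((1 : ℕ), j))

lemma mem_cellsTwoRow {a b : ℕ} {c : ℕ × ℕ} :
    c ∈ cellsTwoRow a b ↔ (c.1 = 0 ∧ c.2 < a) ∨ (c.1 = 1 ∧ c.2 < b) := by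
  obtain ⟨i, j⟩ := c
  simp only [cellsTwoRow, Finset.mem_union, Finset.mem_image, Finset.mem_range, Prod.mk.injEq]
  constructor
  · rintro (⟨k, hk, rfl, rfl⟩ | ⟨k, hk, rfl, rfl⟩) <;> simp [hk]
  · rintro (⟨rfl, h⟩ | ⟨rfl, h⟩)
    · exact Or.inl ⟨j, h, rfl, rfl⟩
    · exact Or.inr ⟨j, h, rfl, rfl⟩

lemma card_cellsTwoRow (a b : ℕ) : (cellsTwoRow a b).card = a + b := by
  rw [cellsTwoRow, Finset.card_union_of_disjoint, Finset.card_image_of_injective _ (by intro x y h; simpa using h), Finset.card_image_of_injective _ (by intro x y h; simpa using h), Finset.card_range, Finset.card_range]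
  · simp [Finset.disjoint_left]

instance sytFinite (s : Finset (ℕ × ℕ)) : Finite {T // IsSYT s T} := by
  have hb : ∀ (T : {T // IsSYT s T}) (c : ℕ × ℕ), c ∈ s → T.1 c ≤ s.card := by
    intro T c hc
    exact (T.2.2.1.mapsTo hc).2
  apply Finite.of_injective (fun T : {T // IsSYT s T} =>
    (fun c : s => (⟨T.1 c, Nat.lt_succ_of_le (hb T c c.2)⟩ : Fin (s.card + 1))))
  intro T U h
  apply Subtype.ext
  funext c
  by_cases hc : c ∈ s
  · exact congrArg Fin.val (congrFun h ⟨c, hc⟩)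
  · rw [T.2.1 c hc, U.2.1 c hc]


open Function

/-- Removing the maximal cell from an SYT. -/
lemma isSYT_remove {s : Finset (ℕ × ℕ)} {T : ℕ × ℕ → ℕ} {c : ℕ × ℕ}
    (hT : IsSYT s T) (hc : c ∈ s) (hmax : T c = s.card) :
    IsSYT (s.erase c) (update T c 0) := by
  obtain ⟨h0, ⟨hmt, hinj, hsurj⟩, hmono⟩ := hT
  have hcard : (s.erase c).card = s.card - 1 := Finset.card_erase_of_mem hc
  have hne : ∀ d ∈ s.erase c, d ≠ c := fun d hd => Finset.ne_of_mem_erase hd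
  refine ⟨?_, ⟨?_, ?_, ?_⟩, ?_⟩
  · intro d hd
    by_cases hdc : d = c
    · subst hdc; exact update_self d 0 T
    · rw [update_of_ne hdc]
      exact h0 d (fun hds => hd (Finset.mem_erase.2 ⟨hdc, hds⟩))
  · intro d hd
    rw [Finset.mem_coe] at hd
    have hds : d ∈ s := Finset.mem_of_mem_erase hd
    have h1 := hmt hds
    rw [update_of_ne (hne d hd)]
    have hdn : T d ≠ s.card := by
      intro h
      exact hne d hd (hinj hds hc (h.trans hmax.symm))
    simp only [Set.mem_Icc, hcard] at h1 ⊢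
    omega
  · intro d hd e he hde
    replace hd : d ∈ s.erase c := hd
    replace he : e ∈ s.erase c := he
    rw [update_of_ne (hne d hd), update_of_ne (hne e he)] at hde
    exact hinj (Finset.mem_of_mem_erase hd) (Finset.mem_of_mem_erase he) hde
  · intro m hm
    simp only [Set.mem_Icc, hcard] at hm
    have hcpos : 1 ≤ s.card := Finset.card_pos.2 ⟨c, hc⟩
    obtain ⟨d, hds, hdm⟩ := hsurj (Set.mem_Icc.2 ⟨hm.1, by omega⟩)
    rw [Finset.mem_coe] at hds
    have hdc : d ≠ c := by
      rintro rfl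
      rw [hmax] at hdm
      omega
    refine ⟨d, ?_, by rwa [update_of_ne hdc]⟩
    rw [Finset.mem_coe, Finset.mem_erase]
    exact ⟨hdc, hds⟩
  · intro d hd e he hrel
    rw [update_of_ne (hne d hd), update_of_ne (hne e he)]
    exact hmono d (Finset.mem_of_mem_erase hd) e (Finset.mem_of_mem_erase he) hrel

/-- Adding a new maximal cell at an outer corner of an SYT. -/
lemma isSYT_add {s' : Finset (ℕ × ℕ)} {T' : ℕ × ℕ → ℕ} {c : ℕ × ℕ}
    (hT : IsSYT s' T') (hc : c ∉ s')
    (hcorner : ∀ c' ∈ insert c s',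
      ¬((c.1 = c'.1 ∧ c.2 < c'.2) ∨ (c.2 = c'.2 ∧ c.1 < c'.1))) :
    IsSYT (insert c s') (update T' c (s'.card + 1)) := by
  obtain ⟨h0, ⟨hmt, hinj, hsurj⟩, hmono⟩ := hT
  have hcard : (insert c s').card = s'.card + 1 := Finset.card_insert_of_notMem hc
  have hub : ∀ d ∈ s', T' d ≤ s'.card := fun d hd => (hmt hd).2
  have hlb : ∀ d ∈ s', 1 ≤ T' d := fun d hd => (hmt hd).1
  have hnec : ∀ d ∈ s', d ≠ c := by
    rintro d hd rfl; exact hc hd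
  refine ⟨?_, ⟨?_, ?_, ?_⟩, ?_⟩
  · intro d hd
    have hdc : d ≠ c := fun h => hd (h ▸ Finset.mem_insert_self c s')
    rw [update_of_ne hdc]
    exact h0 d (fun hds => hd (Finset.mem_insert_of_mem hds))
  · intro d hd
    rw [Finset.mem_coe, Finset.mem_insert] at hd
    rw [hcard]
    rcases hd with rfl | hds
    · rw [update_self]
      exact Set.mem_Icc.2 ⟨by omega, le_refl _⟩
    · rw [update_of_ne (hnec d hds)]
      exact Set.mem_Icc.2 ⟨hlb d hds, (hub d hds).trans (Nat.le_succ _)⟩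
  · intro d hd e he hde
    replace hd : d ∈ insert c s' := hd
    replace he : e ∈ insert c s' := he
    rw [Finset.mem_insert] at hd he
    rcases hd with rfl | hds <;> rcases he with rfl | hes
    · rfl
    · rw [update_self, update_of_ne (hnec e hes)] at hde
      exact absurd hde.symm (Nat.ne_of_lt (Nat.lt_succ_of_le (hub e hes)))
    · rw [update_self, update_of_ne (hnec d hds)] at hde
      exact absurd hde (Nat.ne_of_lt (Nat.lt_succ_of_le (hub d hds)))
    · rw [update_of_ne (hnec d hds), update_of_ne (hnec e hes)] at hde
      exact hinj hds hes hde
  · intro m hm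
    rw [hcard] at hm
    simp only [Set.mem_Icc] at hm
    rcases Nat.lt_or_ge m (s'.card + 1) with hlt | hge
    · obtain ⟨d, hds, hdm⟩ := hsurj (Set.mem_Icc.2 ⟨hm.1, by omega⟩)
      rw [Finset.mem_coe] at hds
      refine ⟨d, ?_, by rwa [update_of_ne (hnec d hds)]⟩
      rw [Finset.mem_coe, Finset.mem_insert]
      exact Or.inr hds
    · have hmeq : m = s'.card + 1 := by omega
      refine ⟨c, ?_, by rw [update_self, hmeq]⟩
      rw [Finset.mem_coe]
      exact Finset.mem_insert_self c s'
  · intro d hd e he hrel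
    rw [Finset.mem_insert] at hd he
    rcases hd with rfl | hds
    · exact absurd hrel (hcorner e (by rw [Finset.mem_insert]; tauto))
    rcases he with rfl | hes
    · rw [update_of_ne (hnec d hds), update_self]
      exact Nat.lt_succ_of_le (hub d hds)
    · rw [update_of_ne (hnec d hds), update_of_ne (hnec e hes)]
      exact hmono d hds e hes hrel

/-- Bijection between SYTs on `insert c s'` whose value at corner `c` is maximal,
and SYTs on `s'`. -/
noncomputable def cornerEquiv (s' : Finset (ℕ × ℕ)) (c : ℕ × ℕ) (hc : c ∉ s')
    (hcorner : ∀ c' ∈ insert c s',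
      ¬((c.1 = c'.1 ∧ c.2 < c'.2) ∨ (c.2 = c'.2 ∧ c.1 < c'.1))) :
    {T // IsSYT (insert c s') T ∧ T c = s'.card + 1} ≃ {T // IsSYT s' T} where
  toFun T := ⟨update T.1 c 0, by
    have h := isSYT_remove T.2.1 (Finset.mem_insert_self c s')
      (by rw [Finset.card_insert_of_notMem hc]; exact T.2.2)
    rwa [Finset.erase_insert hc] at h⟩
  invFun T := ⟨update T.1 c (s'.card + 1),
    ⟨isSYT_add T.2 hc hcorner, update_self c _ T.1⟩⟩
  left_inv T := by
    apply Subtype.ext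
    simp only [Function.update_idem]
    funext x
    by_cases hx : x = c
    · subst hx; rw [update_self]; exact T.2.2.symm
    · rw [update_of_ne hx]
  right_inv T := by
    apply Subtype.ext
    simp only [Function.update_idem]
    funext x
    by_cases hx : x = c
    · subst hx; rw [update_self]; exact (T.2.1 x hc).symm
    · rw [update_of_ne hx]

/-- Location of the maximal entry in a two-row SYT. -/
lemma max_loc {a b : ℕ} {T : ℕ × ℕ → ℕ} (hab : b ≤ a) (h1 : 1 ≤ a + b)
    (hT : IsSYT (cellsTwoRow a b) T) :
    (1 ≤ b ∧ T (1, b - 1) = a + b) ∨ (b + 1 ≤ a ∧ T (0, a - 1) = a + b) := by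
  obtain ⟨h0, ⟨hmt, hinj, hsurj⟩, hmono⟩ := hT
  rw [card_cellsTwoRow] at hmt hsurj
  obtain ⟨d, hds, hdm⟩ := hsurj (Set.mem_Icc.2 ⟨h1, le_refl _⟩)
  rw [Finset.mem_coe] at hds
  have hub : ∀ e ∈ cellsTwoRow a b, T e ≤ a + b := fun e he => (hmt he).2
  have key : ∀ e ∈ cellsTwoRow a b,
      ((d.1 = e.1 ∧ d.2 < e.2) ∨ (d.2 = e.2 ∧ d.1 < e.1)) → False := by
    intro e he hrel
    have := hmono d hds e he hrel
    have := hub e he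
    omega
  rcases mem_cellsTwoRow.1 hds with ⟨hd1, hd2⟩ | ⟨hd1, hd2⟩
  · -- d in row 0 : then d.2 = a - 1 and a > b
    right
    have hcol : d.2 = a - 1 := by
      by_contra hcol
      exact key (0, d.2 + 1) (mem_cellsTwoRow.2 (Or.inl ⟨rfl, by omega⟩))
        (Or.inl ⟨by rw [hd1], by omega⟩)
    have hgt : b + 1 ≤ a := by
      by_contra hgt
      have hba : a = b := by omega
      exact key (1, d.2) (mem_cellsTwoRow.2 (Or.inr ⟨rfl, by omega⟩))
        (Or.inr ⟨rfl, by omega⟩)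
    refine ⟨hgt, ?_⟩
    have : d = (0, a - 1) := Prod.ext hd1 hcol
    rwa [← this]
  · left
    have hcol : d.2 = b - 1 := by
      by_contra hcol
      exact key (1, d.2 + 1) (mem_cellsTwoRow.2 (Or.inr ⟨rfl, by omega⟩))
        (Or.inl ⟨by rw [hd1], by omega⟩)
    refine ⟨by omega, ?_⟩
    have : d = (1, b - 1) := Prod.ext hd1 hcol
    rwa [← this]

lemma insertA {x y : ℕ} (hx : 1 ≤ x) :
    cellsTwoRow x y = insert (0, x - 1) (cellsTwoRow (x - 1) y) := by
  ext ⟨i, j⟩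
  simp only [mem_cellsTwoRow, Finset.mem_insert, Prod.mk.injEq]
  omega

lemma notMemA {x y : ℕ} : ((0 : ℕ), x - 1) ∉ cellsTwoRow (x - 1) y := by
  simp only [mem_cellsTwoRow]
  omega

lemma cornerA {x y : ℕ} (hyx : y + 1 ≤ x) :
    ∀ c' ∈ insert ((0 : ℕ), x - 1) (cellsTwoRow (x - 1) y),
      ¬((((0 : ℕ), x - 1).1 = c'.1 ∧ ((0 : ℕ), x - 1).2 < c'.2) ∨
        (((0 : ℕ), x - 1).2 = c'.2 ∧ ((0 : ℕ), x - 1).1 < c'.1)) := by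
  intro c' hc'
  rw [← insertA (by omega)] at hc'
  rcases mem_cellsTwoRow.1 hc' with ⟨h1, h2⟩ | ⟨h1, h2⟩ <;> simp only [] <;> omega

lemma insertB {x y : ℕ} (hy : 1 ≤ y) :
    cellsTwoRow x y = insert (1, y - 1) (cellsTwoRow x (y - 1)) := by
  ext ⟨i, j⟩
  simp only [mem_cellsTwoRow, Finset.mem_insert, Prod.mk.injEq]
  omega

lemma notMemB {x y : ℕ} : ((1 : ℕ), y - 1) ∉ cellsTwoRow x (y - 1) := by
  simp only [mem_cellsTwoRow]
  omega

lemma cornerB {x y : ℕ} (hy : 1 ≤ y) (hyx : y ≤ x) :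
    ∀ c' ∈ insert ((1 : ℕ), y - 1) (cellsTwoRow x (y - 1)),
      ¬((((1 : ℕ), y - 1).1 = c'.1 ∧ ((1 : ℕ), y - 1).2 < c'.2) ∨
        (((1 : ℕ), y - 1).2 = c'.2 ∧ ((1 : ℕ), y - 1).1 < c'.1)) := by
  intro c' hc'
  rw [← insertB hy] at hc'
  rcases mem_cellsTwoRow.1 hc' with ⟨h1, h2⟩ | ⟨h1, h2⟩ <;> simp only [] <;> omega

lemma count_corner_part {x y : ℕ} (s' : Finset (ℕ × ℕ)) (c : ℕ × ℕ)
    (hins : cellsTwoRow x y = insert c s') (hc : c ∉ s') (hcard : s'.card + 1 = x + y)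
    (hcorner : ∀ c' ∈ insert c s',
      ¬((c.1 = c'.1 ∧ c.2 < c'.2) ∨ (c.2 = c'.2 ∧ c.1 < c'.1))) :
    Nat.card {T // IsSYT (cellsTwoRow x y) T ∧ T c = x + y} = sytCount s' := by
  rw [sytCount, hins, ← hcard]
  exact Nat.card_congr (cornerEquiv s' c hc hcorner)

lemma count_corner {x y : ℕ} (s' : Finset (ℕ × ℕ)) (c : ℕ × ℕ)
    (hins : cellsTwoRow x y = insert c s') (hc : c ∉ s') (hcard : s'.card + 1 = x + y)
    (hcorner : ∀ c' ∈ insert c s',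
      ¬((c.1 = c'.1 ∧ c.2 < c'.2) ∨ (c.2 = c'.2 ∧ c.1 < c'.1)))
    (hforced : ∀ T, IsSYT (cellsTwoRow x y) T → T c = x + y) :
    sytCount (cellsTwoRow x y) = sytCount s' := by
  rw [← count_corner_part s' c hins hc hcard hcorner, sytCount]
  exact Nat.card_congr (Equiv.subtypeEquivRight
    (p := fun T => IsSYT (cellsTwoRow x y) T)
    (q := fun T => IsSYT (cellsTwoRow x y) T ∧ T c = x + y)
    (fun T => ⟨fun h => ⟨h, hforced T h⟩, And.left⟩))

lemma syt_rec (x y : ℕ) (hyx : y ≤ x) (h1 : 1 ≤ x + y) :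
    sytCount (cellsTwoRow x y) =
      (if y + 1 ≤ x then sytCount (cellsTwoRow (x - 1) y) else 0) +
      (if 1 ≤ y then sytCount (cellsTwoRow x (y - 1)) else 0) := by
  have hcA : (cellsTwoRow (x - 1) y).card + 1 = x + y := by
    rw [card_cellsTwoRow]; omega
  have hcB : 1 ≤ y → (cellsTwoRow x (y - 1)).card + 1 = x + y := by
    intro hy; rw [card_cellsTwoRow]; omega
  rcases Nat.eq_zero_or_pos y with rfl | hy
  · -- y = 0, x ≥ 1
    rw [if_pos (show 0 + 1 ≤ x by omega), if_neg (show ¬(1 ≤ 0) by omega), add_zero]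
    apply count_corner _ _ (insertA (by omega)) notMemA (by rw [card_cellsTwoRow]; omega)
      (cornerA (by omega))
    intro T hT
    rcases max_loc hyx h1 hT with ⟨hb, _⟩ | ⟨_, h⟩
    · omega
    · exact h
  · rcases Nat.lt_or_ge y x with hlt | hge
    · -- 1 ≤ y < x : split at cell (0, x-1)
      rw [if_pos (show y + 1 ≤ x by omega), if_pos (show 1 ≤ y by omega)]
      have hx1 : 1 ≤ x := by omega
      have hyx1 : y + 1 ≤ x := by omega
      have hx0 : 0 < x := by omega
      have hsplit : sytCount (cellsTwoRow x y) =
          Nat.card {T // IsSYT (cellsTwoRow x y) T ∧ T (0, x - 1) = x + y} +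
          Nat.card {T // IsSYT (cellsTwoRow x y) T ∧ ¬(T (0, x - 1) = x + y)} := by
        have e : {T // IsSYT (cellsTwoRow x y) T} ≃
            ({T // IsSYT (cellsTwoRow x y) T ∧ T (0, x - 1) = x + y} ⊕
             {T // IsSYT (cellsTwoRow x y) T ∧ ¬(T (0, x - 1) = x + y)}) :=
          (Equiv.sumCompl
            (fun T : {T // IsSYT (cellsTwoRow x y) T} => T.1 (0, x - 1) = x + y)).symm.trans
          (Equiv.sumCongr
            (Equiv.subtypeSubtypeEquivSubtypeInter
              (fun T => IsSYT (cellsTwoRow x y) T) (fun T => T (0, x - 1) = x + y))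
            (Equiv.subtypeSubtypeEquivSubtypeInter
              (fun T => IsSYT (cellsTwoRow x y) T) (fun T => ¬(T (0, x - 1) = x + y))))
        haveI : Finite {T // IsSYT (cellsTwoRow x y) T ∧ T (0, x - 1) = x + y} :=
          Finite.of_injective
            (fun T => (⟨T.1, T.2.1⟩ : {T // IsSYT (cellsTwoRow x y) T}))
            (by intro a b h; apply Subtype.ext; simpa using congrArg Subtype.val h)
        haveI : Finite {T // IsSYT (cellsTwoRow x y) T ∧ ¬(T (0, x - 1) = x + y)} :=
          Finite.of_injective
            (fun T => (⟨T.1, T.2.1⟩ : {T // IsSYT (cellsTwoRow x y) T}))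
            (by intro a b h; apply Subtype.ext; simpa using congrArg Subtype.val h)
        rw [sytCount, Nat.card_congr e, Nat.card_sum]
      have e1 : Nat.card {T // IsSYT (cellsTwoRow x y) T ∧ T (0, x - 1) = x + y} =
          sytCount (cellsTwoRow (x - 1) y) :=
        count_corner_part _ _ (insertA (x := x) (y := y) hx1) notMemA hcA
          (cornerA hyx1)
      have e2 : Nat.card {T // IsSYT (cellsTwoRow x y) T ∧ ¬(T (0, x - 1) = x + y)} =
          sytCount (cellsTwoRow x (y - 1)) := by
        rw [← count_corner_part _ _ (insertB hy) notMemB (hcB hy) (cornerB hy hyx)]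
        apply Nat.card_congr
        apply Equiv.subtypeEquivRight
        intro T
        constructor
        · rintro ⟨hT, hne⟩
          refine ⟨hT, ?_⟩
          rcases max_loc hyx h1 hT with ⟨_, h⟩ | ⟨_, h⟩
          · exact h
          · exact absurd h hne
        · rintro ⟨hT, h⟩
          refine ⟨hT, fun h0 => ?_⟩
          have hinj := hT.2.1.2.1
          have hmem0 : ((0 : ℕ), x - 1) ∈ cellsTwoRow x y :=
            mem_cellsTwoRow.2 (Or.inl ⟨rfl, Nat.sub_lt hx0 Nat.one_pos⟩)
          have hmem1 : ((1 : ℕ), y - 1) ∈ cellsTwoRow x y :=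
            mem_cellsTwoRow.2 (Or.inr ⟨rfl, Nat.sub_lt hy Nat.one_pos⟩)
          have := hinj (Finset.mem_coe.2 hmem0) (Finset.mem_coe.2 hmem1)
            (h0.trans h.symm)
          simp at this
      rw [hsplit, e1, e2]
    · -- y = x : max forced at (1, y-1)
      have hxy : x = y := by omega
      rw [if_neg (show ¬(y + 1 ≤ x) by omega), if_pos (show 1 ≤ y by omega), zero_add]
      apply count_corner _ _ (insertB hy) notMemB (hcB hy) (cornerB hy hyx)
      intro T hT
      rcases max_loc hyx h1 hT with ⟨_, h⟩ | ⟨hb, _⟩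
      · exact h
      · omega

noncomputable def pfn (n a : ℕ) : ℕ :=
  if n ≤ 2 * a ∧ a ≤ n then sytCount (cellsTwoRow a (n - a)) else 0

noncomputable def vfn (n a : ℕ) : ℕ := pfn n a * (2 * a - n)

noncomputable def hfn (n a : ℕ) : ℕ := pfn n a * (2 * a - n + 1)

lemma S00 : sytCount (cellsTwoRow 0 0) = 1 := by
  have hempty : cellsTwoRow 0 0 = ∅ := by
    ext ⟨i, j⟩; simp [mem_cellsTwoRow]
  rw [hempty, sytCount, Nat.card_eq_one_iff_unique]
  constructor
  · constructor
    intro T U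
    apply Subtype.ext
    funext c
    rw [T.2.1 c (Finset.notMem_empty c), U.2.1 c (Finset.notMem_empty c)]
  · refine ⟨⟨fun _ => 0, fun _ _ => rfl, ?_, ?_⟩⟩
    · simp [Set.BijOn, Set.InjOn, Set.SurjOn, Set.MapsTo]
    · intro c hc
      simp at hc

lemma hfn_rec (n a : ℕ) :
    hfn (n + 1) (a + 1) = pfn n a * (2 * a + 2 - n) + pfn n (a + 1) * (2 * (a + 1) - n) := by
  unfold hfn pfn
  rcases le_or_gt a n with han | han
  · rcases le_or_gt n (2 * a + 1) with h2 | h2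
    · rw [if_pos (show n + 1 ≤ 2 * (a + 1) ∧ a + 1 ≤ n + 1 by omega)]
      have hrec := syt_rec (a + 1) (n - a) (by omega) (by omega)
      simp only [Nat.add_sub_cancel] at hrec
      have hna : n + 1 - (a + 1) = n - a := by omega
      rw [hna, hrec]
      by_cases h3 : n ≤ 2 * a
      · rw [if_pos (show n - a + 1 ≤ a + 1 by omega), if_pos (show n ≤ 2 * a ∧ a ≤ n by omega)]
        by_cases h4 : a + 1 ≤ n
        · rw [if_pos (show 1 ≤ n - a by omega),
            if_pos (show n ≤ 2 * (a + 1) ∧ a + 1 ≤ n by omega)]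
          have hnn : n - a - 1 = n - (a + 1) := by omega
          rw [hnn]
          have hc1 : 2 * (a + 1) - (n + 1) + 1 = 2 * a + 2 - n := by omega
          have hc2 : 2 * (a + 1) - n = 2 * a + 2 - n := by omega
          rw [hc1, hc2, add_mul]
        · rw [if_neg (show ¬(1 ≤ n - a) by omega),
            if_neg (show ¬(n ≤ 2 * (a + 1) ∧ a + 1 ≤ n) by omega)]
          have hc1 : 2 * (a + 1) - (n + 1) + 1 = 2 * a + 2 - n := by omega
          rw [hc1, add_zero, zero_mul, add_zero]
      · rw [if_neg (show ¬(n - a + 1 ≤ a + 1) by omega),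
          if_neg (show ¬(n ≤ 2 * a ∧ a ≤ n) by omega),
          if_pos (show 1 ≤ n - a by omega),
          if_pos (show n ≤ 2 * (a + 1) ∧ a + 1 ≤ n by omega)]
        have hnn : n - a - 1 = n - (a + 1) := by omega
        have hc1 : 2 * (a + 1) - (n + 1) + 1 = 2 * (a + 1) - n := by omega
        rw [hnn, hc1, zero_add, zero_mul, zero_add]
    · rw [if_neg (show ¬(n + 1 ≤ 2 * (a + 1) ∧ a + 1 ≤ n + 1) by omega),
        if_neg (show ¬(n ≤ 2 * a ∧ a ≤ n) by omega)]
      by_cases h5 : n ≤ 2 * (a + 1)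
      · rw [if_pos (show n ≤ 2 * (a + 1) ∧ a + 1 ≤ n by omega)]
        have : 2 * (a + 1) - n = 0 := by omega
        rw [this, mul_zero, zero_mul, zero_mul, add_zero]
      · rw [if_neg (show ¬(n ≤ 2 * (a + 1) ∧ a + 1 ≤ n) by omega)]
        simp
  · rw [if_neg (by omega), if_neg (by omega), if_neg (by omega)]
    simp

lemma pfn_coef (n a : ℕ) : pfn n a * (2 * a + 2 - n) = vfn n a + 2 * pfn n a := by
  unfold vfn
  by_cases hc : n ≤ 2 * a
  · have : 2 * a + 2 - n = (2 * a - n) + 2 := by omega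
    rw [this]
    ring
  · unfold pfn
    rw [if_neg (by omega)]
    simp

lemma hfn_eq (n a : ℕ) : hfn n a = vfn n a + pfn n a := by
  unfold hfn vfn
  by_cases hc : n ≤ 2 * a
  · have : 2 * a - n + 1 = (2 * a - n) + 1 := rfl
    ring
  · unfold pfn
    rw [if_neg (by omega)]
    simp

lemma vfn_zero (n : ℕ) : vfn n 0 = 0 := by
  unfold vfn
  have : 2 * 0 - n = 0 := by omega
  rw [this, mul_zero]

lemma vfn_top (n : ℕ) : vfn n (n + 2) = 0 := by
  unfold vfn pfn
  rw [if_neg (by omega), zero_mul]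

lemma hfn_zero (n : ℕ) : hfn (n + 1) 0 = 0 := by
  unfold hfn pfn
  rw [if_neg (by omega), zero_mul]

lemma vshift (n : ℕ) :
    ∑ a ∈ Finset.range (n + 2), vfn n (a + 1) = ∑ a ∈ Finset.range (n + 2), vfn n a := by
  have h1 := Finset.sum_range_succ' (vfn n) (n + 2)
  have h2 := Finset.sum_range_succ (vfn n) (n + 2)
  rw [vfn_zero] at h1
  rw [vfn_top] at h2
  omega

lemma Fstep (n : ℕ) :
    ∑ a ∈ Finset.range (n + 3), hfn (n + 1) a = 2 * ∑ a ∈ Finset.range (n + 2), hfn n a := by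
  rw [Finset.sum_range_succ' (hfn (n + 1)) (n + 2), hfn_zero, add_zero]
  calc ∑ a ∈ Finset.range (n + 2), hfn (n + 1) (a + 1)
      = ∑ a ∈ Finset.range (n + 2), ((vfn n a + 2 * pfn n a) + vfn n (a + 1)) := by
        apply Finset.sum_congr rfl
        intro a _
        rw [hfn_rec, pfn_coef]
        rfl
    _ = (∑ a ∈ Finset.range (n + 2), (vfn n a + 2 * pfn n a)) +
        ∑ a ∈ Finset.range (n + 2), vfn n (a + 1) := Finset.sum_add_distrib
    _ = (∑ a ∈ Finset.range (n + 2), (vfn n a + 2 * pfn n a)) +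
        ∑ a ∈ Finset.range (n + 2), vfn n a := by rw [vshift]
    _ = ∑ a ∈ Finset.range (n + 2), (2 * (vfn n a + pfn n a)) := by
        rw [← Finset.sum_add_distrib]
        apply Finset.sum_congr rfl
        intro a _
        ring
    _ = 2 * ∑ a ∈ Finset.range (n + 2), hfn n a := by
        rw [Finset.mul_sum]
        apply Finset.sum_congr rfl
        intro a _
        rw [hfn_eq]

lemma Fbase : ∑ a ∈ Finset.range 2, hfn 0 a = 1 := by
  rw [Finset.sum_range_succ, Finset.sum_range_succ, Finset.sum_range_zero]
  unfold hfn pfn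
  rw [if_pos (by omega : 0 ≤ 2 * 0 ∧ 0 ≤ 0), if_neg (by omega : ¬(0 ≤ 2 * 1 ∧ 1 ≤ 0))]
  simp [S00]

lemma Ftotal (n : ℕ) : ∑ a ∈ Finset.range (n + 2), hfn n a = 2 ^ n := by
  induction n with
  | zero => exact Fbase
  | succ m ih =>
      have := Fstep m
      rw [ih] at this
      rw [show m + 1 + 2 = m + 3 from rfl, this, pow_succ]
      ring

/-- Schur–Weyl dimension identity for `d = 2`: summing over all partitions
`λ = (λ₀, λ₁)` of `n` into at most two parts, the product of the number of standard
Young tableaux of shape `λ` and `dim Q²_λ = λ₀ − λ₁ + 1` equals `2ⁿ`. -/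
theorem stmt6 (n : ℕ) :
    (∑ p ∈ ((Finset.range (n + 1)) ×ˢ (Finset.range (n + 1))).filter
        (fun p : ℕ × ℕ => p.2 ≤ p.1 ∧ p.1 + p.2 = n),
      sytCount (cellsTwoRow p.1 p.2) * (p.1 - p.2 + 1)) = 2 ^ n := by
  rw [← Ftotal n]
  have step1 : ∀ a, hfn n a =
      if n ≤ 2 * a ∧ a ≤ n then sytCount (cellsTwoRow a (n - a)) * (2 * a - n + 1) else 0 := by
    intro a
    unfold hfn pfn
    rw [ite_mul, zero_mul]
  calc (∑ p ∈ ((Finset.range (n + 1)) ×ˢ (Finset.range (n + 1))).filter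
        (fun p : ℕ × ℕ => p.2 ≤ p.1 ∧ p.1 + p.2 = n),
      sytCount (cellsTwoRow p.1 p.2) * (p.1 - p.2 + 1))
      = ∑ a ∈ (Finset.range (n + 2)).filter (fun a => n ≤ 2 * a ∧ a ≤ n),
          sytCount (cellsTwoRow a (n - a)) * (2 * a - n + 1) := by
        apply Finset.sum_nbij' (i := fun p : ℕ × ℕ => p.1) (j := fun a => (a, n - a))
        · intro p hp
          simp only [Finset.mem_filter, Finset.mem_product, Finset.mem_range] at hp
          simp only [Finset.mem_filter, Finset.mem_range]
          omega
        · intro a ha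
          simp only [Finset.mem_filter, Finset.mem_range] at ha
          simp only [Finset.mem_filter, Finset.mem_product, Finset.mem_range]
          omega
        · intro p hp
          simp only [Finset.mem_filter, Finset.mem_product, Finset.mem_range] at hp
          ext
          · rfl
          · simp only []
            omega
        · intro a ha
          rfl
        · intro p hp
          simp only [Finset.mem_filter, Finset.mem_product, Finset.mem_range] at hp
          have h1 : p.2 = n - p.1 := by omega
          have h2 : p.1 - p.2 + 1 = 2 * p.1 - n + 1 := by omega
          rw [h2, h1]
    _ = ∑ a ∈ Finset.range (n + 2), hfn n a := by
        rw [Finset.sum_filter]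
        apply Finset.sum_congr rfl
        intro a _
        rw [step1]
end

section
/- For a partition λ of k into at most d parts, the sum over j from 0 to d−1 of dim Q^d_{λ+e_j} (interpreting invalid partitions as contributing 0, and with dimensions given by the Weyl dimension formula) equals d · dim Q^d_λ. -/
/-- Stanley's hook-content (Weyl dimension) formula for `dim Q^d_μ`. -/
def weylDim (d : ℕ) (l : Fin d → ℕ) : ℕ :=
  (∏ p ∈ Finset.univ.filter (fun p : Fin d × Fin d => p.1 < p.2),
      (l p.1 + (p.2 : ℕ) - (l p.2 + (p.1 : ℕ)))) /
    ∏ m ∈ Finset.Icc 1 (d - 1), Nat.factorial m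

/-- `λ + e_j`: add one box to the `j`-th part. -/
def addBox (d : ℕ) (l : Fin d → ℕ) (j : Fin d) : Fin d → ℕ :=
  fun i => if i = j then l i + 1 else l i

open Matrix Finset Polynomial

/-- The numerator of the Weyl dimension formula. -/
def pieriNum (d : ℕ) (l : Fin d → ℕ) : ℕ :=
  ∏ p ∈ Finset.univ.filter (fun p : Fin d × Fin d => p.1 < p.2),
    (l p.1 + (p.2 : ℕ) - (l p.2 + (p.1 : ℕ)))

theorem weylDim_eq_pieriNum_div (d : ℕ) (l : Fin d → ℕ) :
    weylDim d l = pieriNum d l / ∏ m ∈ Finset.Icc 1 (d - 1), Nat.factorial m := rfl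

/-- Pieri rule for Vandermonde determinants: perturbing each variable in turn by `c`
and summing the resulting Vandermonde determinants yields `d` times the original. -/
theorem sum_det_vandermonde_update (d : ℕ) (v : Fin d → ℤ) (c : ℤ) :
    ∑ j : Fin d, (Matrix.vandermonde (Function.update v j (v j + c))).det
      = d * (Matrix.vandermonde v).det := by
  set M : Matrix (Fin d) (Fin d) ℤ := Matrix.vandermonde v with hM
  set B : Matrix (Fin d) (Fin d) ℤ :=
    Matrix.of (fun m k : Fin d => if (m : ℕ) < (k : ℕ)
      then ((k : ℕ).choose (m : ℕ) : ℤ) * c ^ ((k : ℕ) - (m : ℕ)) else 0) with hB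
  have hrow : ∀ j : Fin d, Matrix.vandermonde (Function.update v j (v j + c))
      = M.updateRow j (M j + fun k => (M * B) j k) := by
    intro j
    ext i k
    by_cases hij : i = j
    · subst hij
      rw [Matrix.updateRow_self]
      show (Function.update v i (v i + c) i) ^ (k : ℕ) = _
      rw [Function.update_self, Pi.add_apply, Matrix.mul_apply]
      have h1 : ∀ m : Fin d, M i m * B m k
          = if (m : ℕ) < (k : ℕ)
              then v i ^ (m : ℕ) * c ^ ((k : ℕ) - (m : ℕ)) * ((k : ℕ).choose (m : ℕ) : ℤ)
              else 0 := by
        intro m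
        simp only [hB, hM, Matrix.of_apply, Matrix.vandermonde, mul_ite, mul_zero]
        ring_nf
      simp_rw [h1]
      have h2 : ∑ m : Fin d, (if (m : ℕ) < (k : ℕ)
          then v i ^ (m : ℕ) * c ^ ((k : ℕ) - (m : ℕ)) * ((k : ℕ).choose (m : ℕ) : ℤ) else 0)
          = ∑ m ∈ Finset.range (k : ℕ),
              v i ^ m * c ^ ((k : ℕ) - m) * ((k : ℕ).choose m : ℤ) := by
        rw [Fin.sum_univ_eq_sum_range
          (fun m => if m < (k : ℕ) then v i ^ m * c ^ ((k : ℕ) - m) * ((k : ℕ).choose m : ℤ) else 0),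
          ← Finset.sum_filter]
        apply Finset.sum_congr
        · ext m
          simp only [Finset.mem_filter, Finset.mem_range]
          constructor
          · rintro ⟨_, h⟩; exact h
          · intro h; exact ⟨h.trans k.2, h⟩
        · intros; rfl
      rw [h2, add_pow]
      rw [Finset.sum_range_succ]
      simp [Matrix.vandermonde, hM]
      ring
    · rw [Matrix.updateRow_ne hij]
      simp [Matrix.vandermonde, Function.update_of_ne hij, hM]
  have hdet : ∀ (j : Fin d) (w : Fin d → ℤ),
      (M.updateRow j w).det = ∑ i, Matrix.adjugate M i j * w i := by
    intro j w
    rw [← Matrix.cramer_transpose_apply, Matrix.cramer_eq_adjugate_mulVec,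
      ← Matrix.adjugate_transpose]
    simp [Matrix.mulVec, dotProduct, Matrix.transpose_apply]
  have key : ∑ j : Fin d, (M.updateRow j fun k => (M * B) j k).det = 0 := by
    simp_rw [hdet]
    rw [Finset.sum_comm]
    have h3 : ∀ i : Fin d, ∑ j : Fin d, Matrix.adjugate M i j * (M * B) j i
        = ((Matrix.adjugate M * M) * B) i i := by
      intro i
      rw [Matrix.mul_assoc, Matrix.mul_apply]
    simp_rw [h3, Matrix.adjugate_mul]
    have h4 : ∀ i : Fin d, ((M.det • (1 : Matrix (Fin d) (Fin d) ℤ)) * B) i i = M.det * B i i := by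
      intro i
      rw [Matrix.smul_mul, Matrix.one_mul, Matrix.smul_apply, smul_eq_mul]
    simp_rw [h4]
    have h5 : ∀ i : Fin d, B i i = 0 := by
      intro i; simp [hB]
    simp [h5]
  calc ∑ j : Fin d, (Matrix.vandermonde (Function.update v j (v j + c))).det
      = ∑ j : Fin d, (M.det + (M.updateRow j fun k => (M * B) j k).det) := by
        refine Finset.sum_congr rfl fun j _ => ?_
        rw [hrow j, Matrix.det_updateRow_add, Matrix.updateRow_eq_self]
    _ = d * M.det := by
        rw [Finset.sum_add_distrib, key, add_zero, Finset.sum_const, Finset.card_univ,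
          Fintype.card_fin, nsmul_eq_mul]

theorem factorial_dvd_descPochhammer_eval (k : ℕ) (x : ℤ) :
    ((k.factorial : ℕ) : ℤ) ∣ (descPochhammer ℤ k).eval x := by
  rcases x with n | n
  · rw [Int.ofNat_eq_natCast, descPochhammer_eval_eq_descFactorial ℤ n k]
    exact Int.natCast_dvd_natCast.mpr (Nat.factorial_dvd_descFactorial n k)
  · have h := ascPochhammer_eval_neg_eq_descPochhammer (R := ℤ) (Int.negSucc n) k
    have hn : (-(Int.negSucc n) : ℤ) = ((n + 1 : ℕ) : ℤ) := by
      simp [Int.negSucc_eq]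
    rw [hn] at h
    have hasc : (ascPochhammer ℤ k).eval ((n + 1 : ℕ) : ℤ) = ((n + 1).ascFactorial k : ℤ) := by
      rw [← ascPochhammer_eval_cast, ascPochhammer_nat_eq_ascFactorial]
    have hdvd : ((k.factorial : ℕ) : ℤ) ∣ ((n + 1).ascFactorial k : ℤ) :=
      Int.natCast_dvd_natCast.mpr (Nat.factorial_dvd_ascFactorial _ _)
    have : (descPochhammer ℤ k).eval (Int.negSucc n) = (-1) ^ k * ((n + 1).ascFactorial k : ℤ) := by
      have h2 : ((-1 : ℤ) ^ k) * ((-1 : ℤ) ^ k * (descPochhammer ℤ k).eval (Int.negSucc n))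
          = (-1 : ℤ) ^ k * ((n + 1).ascFactorial k : ℤ) := by rw [← h, hasc]
      rwa [← mul_assoc, ← pow_add, ← two_mul, pow_mul, neg_one_sq, one_pow, one_mul] at h2
    rw [this]
    exact Dvd.dvd.mul_left hdvd _

theorem superfactorial_dvd_det_vandermonde (d : ℕ) (v : Fin d → ℤ) :
    ((∏ m ∈ Finset.Icc 1 (d - 1), m.factorial : ℕ) : ℤ) ∣ (Matrix.vandermonde v).det := by
  classical
  rw [Matrix.det_eval_matrixOfPolynomials_eq_det_vandermonde v (fun i => descPochhammer ℤ i)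
    (fun i => descPochhammer_natDegree (R := ℤ) i) (fun i => monic_descPochhammer ℤ i)]
  set C : Matrix (Fin d) (Fin d) ℤ :=
    Matrix.of (fun i j : Fin d => (descPochhammer ℤ (j : ℕ)).eval (v i) / ((j : ℕ).factorial : ℤ))
    with hC
  have hfact : (Matrix.of fun i j : Fin d => (descPochhammer ℤ (j : ℕ)).eval (v i))
      = C * Matrix.diagonal (fun j : Fin d => ((j : ℕ).factorial : ℤ)) := by
    ext i j
    rw [Matrix.mul_diagonal, hC, Matrix.of_apply, Matrix.of_apply,
      Int.ediv_mul_cancel (factorial_dvd_descPochhammer_eval _ _)]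
  rw [hfact, Matrix.det_mul, Matrix.det_diagonal]
  have hprod : ∏ j : Fin d, ((j : ℕ).factorial : ℤ)
      = ((∏ m ∈ Finset.Icc 1 (d - 1), m.factorial : ℕ) : ℤ) := by
    push_cast
    rw [Fin.prod_univ_eq_prod_range (fun m => (m.factorial : ℤ))]
    rcases Nat.eq_zero_or_pos d with rfl | hd
    · simp
    · have hins : Finset.range d = insert 0 (Finset.Icc 1 (d - 1)) := by
        ext m
        simp only [Finset.mem_range, Finset.mem_insert, Finset.mem_Icc]
        omega
      rw [hins, Finset.prod_insert (by simp)]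
      simp
  rw [hprod]
  exact Dvd.dvd.mul_left dvd_rfl _

theorem prod_pairs_eq {M : Type*} [CommMonoid M] {d : ℕ} (f : Fin d → Fin d → M) :
    ∏ p ∈ Finset.univ.filter (fun p : Fin d × Fin d => p.1 < p.2), f p.1 p.2
      = ∏ i : Fin d, ∏ j ∈ Finset.Ioi i, f i j := by
  rw [Finset.prod_sigma']
  apply Finset.prod_nbij' (i := fun p => ⟨p.1, p.2⟩) (j := fun x => (x.1, x.2))
  · intro p hp
    simp only [Finset.mem_filter, Finset.mem_univ, true_and] at hp
    simp [Finset.mem_sigma, Finset.mem_Ioi, hp]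
  · intro x hx
    simp only [Finset.mem_sigma, Finset.mem_univ, Finset.mem_Ioi, true_and] at hx
    simp [hx]
  · intros; rfl
  · intros; rfl
  · intros; rfl

theorem cast_pieriNum {d : ℕ} (l : Fin d → ℕ) (hl : Antitone l) :
    ((pieriNum d l : ℕ) : ℤ)
      = (Matrix.vandermonde (fun i : Fin d => ((i : ℕ) : ℤ) - (l i : ℤ))).det := by
  rw [Matrix.det_vandermonde, pieriNum, Nat.cast_prod,
    ← prod_pairs_eq (fun i j : Fin d => (((j : ℕ) : ℤ) - (l j : ℤ)) - (((i : ℕ) : ℤ) - (l i : ℤ)))]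
  refine Finset.prod_congr rfl fun p hp => ?_
  simp only [Finset.mem_filter, Finset.mem_univ, true_and] at hp
  have h1 : l p.2 + (p.1 : ℕ) ≤ l p.1 + (p.2 : ℕ) :=
    Nat.add_le_add (hl hp.le) hp.le
  rw [Nat.cast_sub h1]
  push_cast
  ring

theorem bad_j_adjacent {d : ℕ} {lam : Fin d → ℕ} (hmono : Antitone lam) {j : Fin d}
    (hbad : ¬ Antitone (addBox d lam j)) :
    ∃ jp : Fin d, jp < j ∧ lam jp = lam j ∧ (jp : ℕ) + 1 = (j : ℕ) := by
  rw [Antitone] at hbad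
  push_neg at hbad
  obtain ⟨a, b, hab, hfb⟩ := hbad
  have hbj : b = j := by
    by_contra hne
    have h2 : addBox d lam j b = lam b := by simp [addBox, hne]
    have h3 : lam a ≤ addBox d lam j a := by
      by_cases h : a = j <;> simp [addBox, h]
    have h4 : lam b ≤ lam a := hmono hab
    rw [h2] at hfb
    exact absurd hfb (not_lt.mpr (le_trans h4 h3))
  rw [hbj] at hab hfb
  clear hbj
  have haj : a ≠ j := by
    rintro rfl
    exact lt_irrefl _ hfb
  have haltj : a < j := lt_of_le_of_ne hab haj
  have hfa : addBox d lam j a = lam a := by simp [addBox, haj]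
  have hfj : addBox d lam j j = lam j + 1 := by simp [addBox]
  rw [hfa, hfj] at hfb
  have hlamaj : lam a = lam j := le_antisymm (by omega) (hmono hab)
  have hj1 : 1 ≤ (j : ℕ) := by
    have := haltj
    rw [Fin.lt_def] at this
    omega
  refine ⟨⟨(j : ℕ) - 1, by omega⟩, ?_, ?_, by simp; omega⟩
  · rw [Fin.lt_def]
    simp
    omega
  · have hle1 : a ≤ (⟨(j : ℕ) - 1, by omega⟩ : Fin d) := by
      rw [Fin.le_def]
      simp
      rw [Fin.lt_def] at haltj
      omega
    have hle2 : (⟨(j : ℕ) - 1, by omega⟩ : Fin d) ≤ j := by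
      rw [Fin.le_def]
      exact Nat.sub_le _ _
    have := hmono hle1
    have := hmono hle2
    omega

theorem pieriNum_addBox_eq_zero {d : ℕ} {lam : Fin d → ℕ} (hmono : Antitone lam) {j : Fin d}
    (hbad : ¬ Antitone (addBox d lam j)) : pieriNum d (addBox d lam j) = 0 := by
  obtain ⟨jp, hlt, hlam, hcoe⟩ := bad_j_adjacent hmono hbad
  refine Finset.prod_eq_zero (i := (jp, j)) ?_ ?_
  · simp [hlt]
  · have hne : jp ≠ j := Fin.ne_of_lt hlt
    have e1 : addBox d lam j jp = lam jp := by simp [addBox, hne]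
    have e2 : addBox d lam j j = lam j + 1 := by simp [addBox]
    show addBox d lam j jp + (j : ℕ) - (addBox d lam j j + (jp : ℕ)) = 0
    rw [e1, e2]
    omega

theorem det_update_addBox_eq_zero {d : ℕ} {lam : Fin d → ℕ} (hmono : Antitone lam) {j : Fin d}
    (hbad : ¬ Antitone (addBox d lam j)) :
    (Matrix.vandermonde (Function.update (fun i : Fin d => ((i : ℕ) : ℤ) - (lam i : ℤ)) j
      (((j : ℕ) : ℤ) - (lam j : ℤ) + (-1)))).det = 0 := by
  obtain ⟨jp, hlt, hlam, hcoe⟩ := bad_j_adjacent hmono hbad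
  have hne : jp ≠ j := Fin.ne_of_lt hlt
  rw [Matrix.det_vandermonde]
  refine Finset.prod_eq_zero (i := jp) (Finset.mem_univ _) ?_
  refine Finset.prod_eq_zero (i := j) (Finset.mem_Ioi.mpr hlt) ?_
  rw [Function.update_self, Function.update_of_ne hne]
  have h1 : ((jp : ℕ) : ℤ) + 1 = ((j : ℕ) : ℤ) := by exact_mod_cast hcoe
  have h2 : ((lam jp : ℕ) : ℤ) = ((lam j : ℕ) : ℤ) := by exact_mod_cast hlam
  omega

open scoped Classical in
/-- Pieri rule at the level of dimensions: for a partition `λ` of `k` into at most `d`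
parts, `Σ_{j=0}^{d−1} dim Q^d_{λ+e_j}` (invalid partitions contributing `0`)
equals `d · dim Q^d_λ`. -/
theorem stmt9 (d k : ℕ) (hd : 1 ≤ d) (lam : Fin d → ℕ)
    (hmono : Antitone lam) (hsum : ∑ i, lam i = k) :
    (∑ j : Fin d, if Antitone (addBox d lam j) then weylDim d (addBox d lam j) else 0)
      = d * weylDim d lam := by
  classical
  set D : ℕ := ∏ m ∈ Finset.Icc 1 (d - 1), Nat.factorial m with hD
  have hDpos : 0 < D := Finset.prod_pos fun m _ => Nat.factorial_pos m
  set vl : Fin d → ℤ := fun i => ((i : ℕ) : ℤ) - (lam i : ℤ) with hvl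
  -- the numerator identity over ℤ
  have hupdate : ∀ j : Fin d, Antitone (addBox d lam j) →
      (fun i : Fin d => ((i : ℕ) : ℤ) - (addBox d lam j i : ℤ))
        = Function.update vl j (vl j + (-1)) := by
    intro j _
    funext i
    by_cases hij : i = j
    · subst hij
      rw [Function.update_self]
      simp [addBox, hvl]
      ring
    · rw [Function.update_of_ne hij]
      simp [addBox, hij, hvl]
  have hcast_j : ∀ j : Fin d, ((pieriNum d (addBox d lam j) : ℕ) : ℤ)
      = (Matrix.vandermonde (Function.update vl j (vl j + (-1)))).det := by
    intro j
    by_cases hgood : Antitone (addBox d lam j)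
    · rw [cast_pieriNum _ hgood, hupdate j hgood]
    · rw [pieriNum_addBox_eq_zero hmono hgood]
      have := det_update_addBox_eq_zero hmono hgood
      rw [Nat.cast_zero]
      exact this.symm
  have hsum_int : ((∑ j : Fin d, pieriNum d (addBox d lam j) : ℕ) : ℤ)
      = ((d * pieriNum d lam : ℕ) : ℤ) := by
    push_cast
    calc ∑ j : Fin d, ((pieriNum d (addBox d lam j) : ℕ) : ℤ)
        = ∑ j : Fin d, (Matrix.vandermonde (Function.update vl j (vl j + (-1)))).det :=
          Finset.sum_congr rfl fun j _ => hcast_j j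
      _ = d * (Matrix.vandermonde vl).det := sum_det_vandermonde_update d vl (-1)
      _ = d * ((pieriNum d lam : ℕ) : ℤ) := by rw [cast_pieriNum lam hmono]
  have hsumN : ∑ j : Fin d, pieriNum d (addBox d lam j) = d * pieriNum d lam := by
    exact_mod_cast hsum_int
  -- divisibility
  have hdvd_j : ∀ j : Fin d, D ∣ pieriNum d (addBox d lam j) := by
    intro j
    rw [← Int.natCast_dvd_natCast, hcast_j j, hD]
    exact superfactorial_dvd_det_vandermonde d _
  have hdvd_lam : D ∣ pieriNum d lam := by
    rw [← Int.natCast_dvd_natCast, cast_pieriNum lam hmono, hD]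
    exact superfactorial_dvd_det_vandermonde d _
  -- remove the if
  have step1 : (∑ j : Fin d, if Antitone (addBox d lam j) then weylDim d (addBox d lam j) else 0)
      = ∑ j : Fin d, pieriNum d (addBox d lam j) / D := by
    refine Finset.sum_congr rfl fun j _ => ?_
    by_cases hgood : Antitone (addBox d lam j)
    · rw [if_pos hgood, weylDim_eq_pieriNum_div]
    · rw [if_neg hgood, pieriNum_addBox_eq_zero hmono hgood, Nat.zero_div]
  have step2 : ∑ j : Fin d, pieriNum d (addBox d lam j) / D
      = (∑ j : Fin d, pieriNum d (addBox d lam j)) / D := by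
    refine Nat.eq_div_of_mul_eq_left hDpos.ne' ?_
    rw [Finset.sum_mul]
    refine Finset.sum_congr rfl fun j _ => ?_
    rw [Nat.div_mul_cancel (hdvd_j j)]
  rw [step1, step2, hsumN, weylDim_eq_pieriNum_div, ← hD,
    Nat.mul_div_assoc d hdvd_lam]
end
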